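/- Every nonempty word over a totally ordered alphabet admits a unique Chen–Fox–Lyndon factorization: it can be written uniquely as a concatenation a₁a₂⋯a_p of Lyndon words with a₁ ≥_lex a₂ ≥_lex ⋯ ≥_lex a_p. -/

import Mathlib

/-- A nonempty word `w` over a totally ordered alphabet is Lyndon if it is
lexicographically strictly smaller than each of its proper nonempty suffixes. -/
def IsLyndon {A : Type*} [LinearOrder A] (w : List A) : Prop :=
  w ≠ [] ∧ ∀ u v : List A, u ≠ [] → v ≠ [] → w = u ++ v → List.Lex (· < ·) w v

namespace CFLAux

variable {A : Type*} [LinearOrder A]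

lemma lex_iff_lt (x y : List A) : List.Lex (· < ·) x y ↔ x < y := Iff.rfl

lemma lt_append (p t : List A) (ht : t ≠ []) : p < p ++ t := by
  induction p with
  | nil =>
    cases t with
    | nil => exact absurd rfl ht
    | cons a t => exact List.Lex.nil
  | cons a p ih => exact List.Lex.cons ih

lemma not_append_lt (p t : List A) : ¬ (p ++ t < p) := by
  intro h
  rcases eq_or_ne t [] with rfl | ht
  · rw [List.append_nil] at h; exact lt_irrefl _ h
  · exact lt_irrefl _ (lt_trans h (lt_append p t ht))

lemma append_lt_append_iff (p s t : List A) : p ++ s < p ++ t ↔ s < t := by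
  induction p with
  | nil => rfl
  | cons a p ih =>
    constructor
    · intro h
      rcases List.lex_cons_iff.mp h with h'
      exact ih.mp h'
    · intro h
      exact List.Lex.cons (ih.mpr h)

/-- If `s < t` and `s` is not a prefix of `t`, the comparison is decided by a strict
letter difference, so any extensions compare the same way. -/
lemma lex_extend : ∀ {s t : List A}, s < t → ¬ s <+: t → ∀ s' t', s ++ s' < t ++ t' := by
  intro s t h
  induction h with
  | nil => intro hp; exact absurd (List.nil_prefix) hp
  | @rel a l₁ b l₂ hab => intro _ s' t'; exact List.Lex.rel hab
  | @cons a l₁ l₂ h ih =>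
    intro hp s' t'
    have hp' : ¬ l₁ <+: l₂ := fun hq => hp (List.cons_prefix_cons.mpr ⟨rfl, hq⟩)
    exact List.Lex.cons (ih hp' s' t')

/-- If `u < v`, `u` nonempty and `v` Lyndon, then `uv < v`. -/
lemma append_lt_right {u v : List A} (huv : u < v) (hv : IsLyndon v) (hu : u ≠ []) :
    u ++ v < v := by
  by_cases hp : u <+: v
  · obtain ⟨v₂, rfl⟩ := hp
    have hv₂ : v₂ ≠ [] := by
      rintro rfl
      rw [List.append_nil] at huv
      exact lt_irrefl _ huv
    have := hv.2 u v₂ hu hv₂ rfl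
    rw [lex_iff_lt] at this
    exact (append_lt_append_iff u (u ++ v₂) v₂).mpr this
  · have := lex_extend huv hp v []
    rwa [List.append_nil] at this

/-- Merging lemma: the concatenation of two Lyndon words `u < v` is Lyndon. -/
lemma isLyndon_append {u v : List A} (hu : IsLyndon u) (hv : IsLyndon v) (huv : u < v) :
    IsLyndon (u ++ v) := by
  refine ⟨by simp [hu.1], ?_⟩
  intro x y hx hy hxy
  rw [lex_iff_lt]
  rcases List.append_eq_append_iff.mp hxy with ⟨e, hxe, hve⟩ | ⟨e, hue, hye⟩
  · -- x = u ++ e, v = e ++ y : y is a suffix of v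
    rcases eq_or_ne e [] with rfl | he
    · simp only [List.nil_append] at hve
      subst hve
      exact append_lt_right huv hv hu.1
    · have hvy := hv.2 e y he hy hve
      rw [lex_iff_lt] at hvy
      exact lt_trans (append_lt_right huv hv hu.1) hvy
  · -- u = x ++ e, y = e ++ v
    rcases eq_or_ne e [] with rfl | he
    · rw [List.append_nil] at hue
      simp only [List.nil_append] at hye
      subst hye
      exact append_lt_right huv hv hu.1
    · have hue' := hu.2 x e hx he hue
      rw [lex_iff_lt] at hue'
      have hnp : ¬ u <+: e := by
        intro hpre
        have h1 : e.length < u.length := by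
          rw [hue, List.length_append]
          have := List.length_pos_iff.mpr hx
          omega
        have h2 := hpre.length_le
        omega
      have := lex_extend hue' hnp v v
      rw [hye]
      rw [hue] at this ⊢
      simpa using this

/-- Any factorization into Lyndon words can be turned into a non-increasing one
with the same concatenation (merging adjacent increasing pairs). -/
lemma exists_chain : ∀ (n : ℕ) (f : List (List A)), f.length ≤ n →
    (∀ x ∈ f, IsLyndon x) →
    ∃ f' : List (List A), (∀ x ∈ f', IsLyndon x) ∧
      f'.Chain' (fun a b => ¬ List.Lex (· < ·) a b) ∧
      f'.flatten = f.flatten ∧ f'.length ≤ f.length := by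
  intro n
  induction n with
  | zero =>
    intro f hf _
    rw [Nat.le_zero, List.length_eq_zero_iff] at hf
    subst hf
    exact ⟨[], by simp, List.IsChain.nil, by simp⟩
  | succ n ih =>
    intro f hf hLy
    cases f with
    | nil => exact ⟨[], by simp, List.IsChain.nil, by simp⟩
    | cons a f'' =>
      simp only [List.length_cons, Nat.succ_le_succ_iff] at hf
      obtain ⟨g, hgLy, hgch, hgfl, hglen⟩ := ih f'' hf (fun x hx => hLy x (List.mem_cons_of_mem a hx))
      cases g with
      | nil =>
        refine ⟨[a], ?_, List.isChain_singleton a, ?_, by simp⟩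
        · intro x hx; rw [List.mem_singleton] at hx; exact hx ▸ hLy a (List.mem_cons_self)
        · simp only [List.flatten] at hgfl ⊢
          simp [← hgfl]
      | cons c g'' =>
        by_cases hac : a < c
        · have hcLy : IsLyndon (a ++ c) :=
            isLyndon_append (hLy a (List.mem_cons_self)) (hgLy c (List.mem_cons_self)) hac
          have hlen2 : ((a ++ c) :: g'').length ≤ n := by
            simp only [List.length_cons] at hglen ⊢
            omega
          obtain ⟨h', h'Ly, h'ch, h'fl, h'len⟩ := ih ((a ++ c) :: g'') hlen2 (by
            intro x hx
            rcases List.mem_cons.mp hx with rfl | hx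
            · exact hcLy
            · exact hgLy x (List.mem_cons_of_mem c hx))
          refine ⟨h', h'Ly, h'ch, ?_, ?_⟩
          · rw [h'fl]
            simp only [List.flatten_cons, List.append_assoc]
            rw [← hgfl, List.flatten_cons]
          · simp only [List.length_cons] at h'len hglen ⊢
            omega
        · refine ⟨a :: c :: g'', ?_, ?_, ?_, ?_⟩
          · intro x hx
            rcases List.mem_cons.mp hx with rfl | hx
            · exact hLy x (List.mem_cons_self)
            · exact hgLy x hx
          · exact List.isChain_cons_cons.mpr ⟨hac, hgch⟩
          · simp only [List.flatten_cons]
            rw [← hgfl, List.flatten_cons]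
          · simp only [List.length_cons] at hglen ⊢
            omega

/-- Key step for uniqueness: a Lyndon word `a` cannot properly overrun a
factorization by words all `≤ a`. -/
lemma no_overrun : ∀ (g : List (List A)) (a c d t : List A), IsLyndon a →
    (∀ x ∈ g, ¬ a < x) → d ≠ [] → c ≠ [] → a = d ++ c → c ++ t = g.flatten → False := by
  intro g
  induction g with
  | nil =>
    intro a c d t _ _ _ hc _ hfl
    simp only [List.flatten_nil, List.append_eq_nil_iff] at hfl
    exact hc hfl.1
  | cons b g' ih =>
    intro a c d t ha hall hd hc hsplit hfl
    have hac : a < c := by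
      have := ha.2 d c hd hc hsplit
      rwa [lex_iff_lt] at this
    rw [List.flatten_cons] at hfl
    rcases List.append_eq_append_iff.mp hfl with ⟨e, hbe, _⟩ | ⟨e, hce, hge⟩
    · -- b = c ++ e : c is a prefix of b
      have hcb : ¬ b < c := hbe ▸ not_append_lt c e
      have hba : ¬ a < b := hall b (List.mem_cons_self)
      rw [not_lt] at hcb hba
      exact lt_irrefl a (lt_of_lt_of_le hac (le_trans hcb hba))
    · -- c = b ++ e
      rcases eq_or_ne e [] with rfl | he
      · rw [List.append_nil] at hce
        subst hce
        exact hall c (List.mem_cons_self) hac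
      · refine ih a e (d ++ b) t ha (fun x hx => hall x (List.mem_cons_of_mem b hx)) ?_ he ?_ hge.symm
        · simp [hd]
        · rw [hsplit, hce, List.append_assoc]

/-- The first factors of two CFL factorizations of the same word agree
(assuming `b` is the shorter one). -/
lemma first_factor_eq (a b : List A) (F G : List A) (g : List (List A))
    (ha : IsLyndon a) (hb : b ≠ []) (hga : ∀ x ∈ g, ¬ b < x)
    (heq : a ++ F = b ++ G) (hGfl : G = g.flatten) (hlen : b.length ≤ a.length) : a = b := by
  rcases List.append_eq_append_iff.mp heq with ⟨e, hbe, _⟩ | ⟨e, hae, hGe⟩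
  · -- b = a ++ e, forces e = []
    have : e = [] := by
      have := congrArg List.length hbe
      simp only [List.length_append] at this
      have : e.length = 0 := by omega
      exact List.length_eq_zero_iff.mp this
    rw [this, List.append_nil] at hbe
    exact hbe.symm
  · -- a = b ++ e
    rcases eq_or_ne e [] with rfl | he
    · rw [List.append_nil] at hae; exact hae
    · exfalso
      have hall : ∀ x ∈ g, ¬ a < x := by
        intro x hx hax
        have hba : ¬ a < b := hae ▸ not_append_lt b e
        rw [not_lt] at hba
        exact hga x hx (lt_of_le_of_lt hba hax)
      exact no_overrun g a e b F ha hall hb he hae (by rw [← hGe, hGfl])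

lemma flatten_map_singleton (w : List A) : (w.map (fun a => [a])).flatten = w := by
  induction w with
  | nil => simp
  | cons a w ih => simp [ih]

lemma isLyndon_singleton (a : A) : IsLyndon [a] := by
  refine ⟨List.cons_ne_nil a [], ?_⟩
  intro u v hu hv huv
  exfalso
  have := congrArg List.length huv
  simp only [List.length_cons, List.length_nil, List.length_append] at this
  have hu' := List.length_pos_iff.mpr hu
  have hv' := List.length_pos_iff.mpr hv
  omega

lemma unique_fact : ∀ (f g : List (List A)),
    (∀ x ∈ f, IsLyndon x) → f.Chain' (fun a b => ¬ List.Lex (· < ·) a b) →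
    (∀ x ∈ g, IsLyndon x) → g.Chain' (fun a b => ¬ List.Lex (· < ·) a b) →
    f.flatten = g.flatten → f = g := by
  haveI : IsTrans (List A) (fun a b : List A => ¬ List.Lex (· < ·) a b) :=
    ⟨fun x y z h1 h2 => by
      rw [lex_iff_lt, not_lt] at h1 h2 ⊢
      exact le_trans h2 h1⟩
  intro f
  induction f with
  | nil =>
    intro g _ _ hgLy _ hfl
    cases g with
    | nil => rfl
    | cons b g' =>
      exfalso
      simp only [List.flatten_nil, List.flatten_cons] at hfl
      exact (hgLy b (List.mem_cons_self)).1 (List.append_eq_nil_iff.mp hfl.symm).1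
  | cons a f' ihf =>
    intro g hfLy hfch hgLy hgch hfl
    cases g with
    | nil =>
      exfalso
      simp only [List.flatten_nil, List.flatten_cons] at hfl
      exact (hfLy a (List.mem_cons_self)).1 (List.append_eq_nil_iff.mp hfl).1
    | cons b g' =>
      have hpf : ∀ x ∈ f', ¬ List.Lex (· < ·) a x :=
        List.pairwise_cons.mp (List.isChain_iff_pairwise.mp hfch) |>.1
      have hpg : ∀ x ∈ g', ¬ List.Lex (· < ·) b x :=
        List.pairwise_cons.mp (List.isChain_iff_pairwise.mp hgch) |>.1
      simp only [List.flatten_cons] at hfl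
      have hab : a = b := by
        rcases le_or_gt b.length a.length with h | h
        · exact first_factor_eq a b f'.flatten g'.flatten g'
            (hfLy a (List.mem_cons_self)) (hgLy b (List.mem_cons_self)).1
            hpg hfl rfl h
        · exact (first_factor_eq b a g'.flatten f'.flatten f'
            (hgLy b (List.mem_cons_self)) (hfLy a (List.mem_cons_self)).1
            hpf hfl.symm rfl h.le).symm
      subst hab
      have hfl' : f'.flatten = g'.flatten := List.append_cancel_left hfl
      have := ihf g' (fun x hx => hfLy x (List.mem_cons_of_mem a hx)) hfch.tail
        (fun x hx => hgLy x (List.mem_cons_of_mem a hx)) hgch.tail hfl'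
      rw [this]

end CFLAux

/-- every nonempty word over a totally ordered alphabet admits a unique
Chen–Fox–Lyndon factorization into a lexicographically non-increasing concatenation of
Lyndon words. -/
theorem exists_unique_CFL_factorization {A : Type*} [LinearOrder A]
    (w : List A) (hw : w ≠ []) :
    ∃! f : List (List A),
      (∀ a ∈ f, IsLyndon a) ∧
      f.Chain' (fun a b => ¬ List.Lex (· < ·) a b) ∧
      f.flatten = w := by
  obtain ⟨f₀, hLy, hch, hfl, -⟩ := CFLAux.exists_chain (w.map (fun a => [a])).length
    (w.map (fun a => [a])) le_rfl (by
      intro x hx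
      obtain ⟨a, -, rfl⟩ := List.mem_map.mp hx
      exact CFLAux.isLyndon_singleton a)
  rw [CFLAux.flatten_map_singleton] at hfl
  exact ⟨f₀, ⟨hLy, hch, hfl⟩, fun y hy =>
    CFLAux.unique_fact y f₀ hy.1 hy.2.1 hLy hch (by rw [hy.2.2, hfl])⟩
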